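/- In the space X(F) (with F a family of pairwise disjoint non-empty closed subsets of ℕ*), if U is a clopen set whose trace on ℕ is contained in the initial segment N = {0,…,N−1}, then U ⊆ N; more generally in a finite product ∏_{i<n} X(F_i), if a clopen set U satisfies U ∩ ℕⁿ ⊆ 𝕊ᴺ (the union of stripes {x ∈ ℕⁿ : x_i < N}), then U ⊆ Sᴺ (the union of stripes {x : x_i ∈ N} in the product). -/

import Mathlib

/-- ℕ* : the nonprincipal ultrafilters on ℕ, with the topology inherited from βℕ. -/
def NStar : Type := {U : Ultrafilter ℕ // (U : Filter ℕ) ≤ Filter.cofinite}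

instance : TopologicalSpace NStar := instTopologicalSpaceSubtype

/-- A* : the set of nonprincipal ultrafilters containing A. -/
def AStar (A : Set ℕ) : Set NStar := {U | A ∈ U.1}

/-- The space X(F): underlying set ℕ ⊔ F. -/
def XF (F : Set (Set NStar)) : Type := ℕ ⊕ F

/-- The coarsest topology making each {n} (n ∈ ℕ) open, and each {K} ∪ A open
whenever K ∈ F, A ⊆ ℕ and K ⊆ A*. -/
instance (F : Set (Set NStar)) : TopologicalSpace (XF F) :=
  TopologicalSpace.generateFrom
    ({S | ∃ n : ℕ, S = {Sum.inl n}} ∪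
     {S | ∃ (K : F) (A : Set ℕ), (K : Set NStar) ⊆ AStar A ∧
        S = insert (Sum.inr K) (Sum.inl '' A)})

lemma key {F : Set (Set NStar)} {V : Set (XF F)} (hV : IsOpen V) :
    ∀ (K : F) (u : NStar), u ∈ (K : Set NStar) → Sum.inr K ∈ V →
      {a : ℕ | (Sum.inl a : XF F) ∈ V} ∈ (u.1 : Filter ℕ) := by
  have h : TopologicalSpace.GenerateOpen _ V := hV
  clear hV
  induction h with
  | basic s hs =>
    intro K u hu hK
    rcases hs with ⟨m, rfl⟩ | ⟨K', A, hKA, rfl⟩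
    · exact (Sum.inr_ne_inl hK).elim
    · have hKK : K' = K := by
        rcases hK with h | h
        · exact (Sum.inr.inj h).symm
        · simp at h
      subst hKK
      have hA : A ∈ (u.1 : Filter ℕ) := hKA hu
      refine Filter.mem_of_superset hA ?_
      intro a ha
      exact Or.inr ⟨a, ha, rfl⟩
  | univ => intro K u hu hK; exact Filter.univ_mem
  | inter s t hs ht ihs iht =>
    intro K u hu hK
    exact Filter.inter_mem (ihs K u hu hK.1) (iht K u hu hK.2)
  | sUnion S hS ih =>
    intro K u hu hK
    obtain ⟨t, htS, hKt⟩ := hK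
    exact Filter.mem_of_superset (ih t htS K u hu hKt) fun a ha => ⟨t, htS, ha⟩

/-- In X = ∏_{i<n} X(F_i), if a clopen U has trace on ℕⁿ contained in the stripe
union 𝕊ᴺ, then U ⊆ Sᴺ: every point of U has some coordinate equal to some m < N. -/
theorem clopen_subset_stripes (n N : ℕ) (F : Fin n → Set (Set NStar))
    (hne : ∀ i, ∀ K ∈ F i, Set.Nonempty K) (hcl : ∀ i, ∀ K ∈ F i, IsClosed K)
    (hdisj : ∀ i, ∀ K ∈ F i, ∀ L ∈ F i, K ≠ L → Disjoint K L)
    (U : Set (∀ i, XF (F i))) (hU : IsClopen U)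
    (htrace : ∀ x : Fin n → ℕ, (fun i => (Sum.inl (x i) : XF (F i))) ∈ U → ∃ i, x i < N) :
    ∀ y ∈ U, ∃ i, ∃ m : ℕ, m < N ∧ y i = Sum.inl m := by
  intro y hy
  by_contra hcon
  obtain ⟨I, V, hV, hVU⟩ := isOpen_pi_iff.mp hU.2 y hy
  set W : ∀ i, Set (XF (F i)) := fun i => if i ∈ I then V i else Set.univ with hW
  have hWopen : ∀ i, IsOpen (W i) := by
    intro i; by_cases h : i ∈ I <;> simp [hW, h, (hV i · |>.1)]
  have hyW : ∀ i, y i ∈ W i := by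
    intro i; by_cases h : i ∈ I <;> simp [hW, h, (hV i · |>.2)]
  have hWU : Set.pi Set.univ W ⊆ U := by
    intro z hz
    refine hVU fun i hi => ?_
    have := hz i (Set.mem_univ i)
    rw [hW] at this
    simp only at this
    rw [if_pos (Finset.mem_coe.mp hi)] at this
    exact this
  have hex : ∀ i, ∃ a : ℕ, N ≤ a ∧ (Sum.inl a : XF (F i)) ∈ W i := by
    intro i
    rcases hyi : y i with m | K
    · refine ⟨m, ?_, hyi ▸ hyW i⟩
      by_contra hlt
      have hyi' : y i = (Sum.inl m : XF (F i)) := hyi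
      exact hcon ⟨i, m, Nat.lt_of_not_le hlt, hyi'⟩
    · obtain ⟨u, hu⟩ := hne i K K.2
      have h1 : {a : ℕ | (Sum.inl a : XF (F i)) ∈ W i} ∈ (u.1 : Filter ℕ) :=
        key (hWopen i) K u hu (hyi ▸ hyW i)
      have h2 : {a : ℕ | N ≤ a} ∈ (u.1 : Filter ℕ) := by
        apply u.2
        rw [Filter.mem_cofinite]
        have : {a : ℕ | N ≤ a}ᶜ = Set.Iio N := by ext a; simp
        rw [this]; exact Set.finite_Iio N
      obtain ⟨a, ha1, ha2⟩ := Filter.nonempty_of_mem (Filter.inter_mem h2 h1)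
      exact ⟨a, ha1, ha2⟩
  choose x hx1 hx2 using hex
  obtain ⟨i, hi⟩ := htrace x (hWU fun i _ => hx2 i)
  exact absurd hi (Nat.not_lt.mpr (hx1 i))
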